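/- Let H be a finite-dimensional complex Hilbert space and r > 0. Let A = {A_n} and B = {B_n} be two stable sequences of sets of quantum states on H^{⊗n}. Then the set-extended quantum Hoeffding divergence is subadditive along the sequences: for all m, n ∈ ℕ, H_{(m+n),r}(A_{m+n}‖B_{m+n}) ≤ H_{m,r}(A_m‖B_m) + H_{n,r}(A_n‖B_n), where H_{k,r}(A_k‖B_k) := inf_{ρ∈A_k, σ∈B_k} H_{k,r}(ρ‖σ). -/

import Mathlib

open Filter Set
open scoped ComplexOrder Classical

noncomputable section

/-- The index type of the `n`-fold tensor power of a `d`-dimensional Hilbert space. -/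
abbrev TIdx (d n : ℕ) := Fin n → Fin d

/-- Operators on the `n`-fold tensor power of a `d`-dimensional complex Hilbert space. -/
abbrev Mat (d n : ℕ) := Matrix (TIdx d n) (TIdx d n) ℂ

/-- A quantum state: positive semidefinite with unit trace. -/
def IsState {d n : ℕ} (ρ : Mat d n) : Prop := ρ.PosSemidef ∧ ρ.trace = 1

/-- Tensor product of an operator on `H^{⊗m}` and one on `H^{⊗n}`, as an operator on
`H^{⊗(m+n)}`. -/
def tensorProd {d m n : ℕ} (A : Mat d m) (B : Mat d n) : Mat d (m + n) :=
  Matrix.of fun f g =>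
    A (fun i => f (Fin.castAdd n i)) (fun i => g (Fin.castAdd n i)) *
      B (fun j => f (Fin.natAdd m j)) (fun j => g (Fin.natAdd m j))

/-- `suppLE ρ σ` means the support of `ρ` is contained in the support of `σ`
(equivalently, `ker σ ⊆ ker ρ` for Hermitian PSD matrices). -/
def suppLE {d n : ℕ} (ρ σ : Mat d n) : Prop :=
  ∀ v : TIdx d n → ℂ, σ.mulVec v = 0 → ρ.mulVec v = 0

/-- Real matrix power via the functional calculus (junk value `0` for non-Hermitian input);
powers are taken on the support since `(0:ℝ) ^ p = 0` for `p ≠ 0`. -/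
def mpow {d n : ℕ} (A : Mat d n) (p : ℝ) : Mat d n :=
  if h : A.IsHermitian then
    (h.eigenvectorUnitary : Mat d n) *
      Matrix.diagonal (fun i => ((h.eigenvalues i ^ p : ℝ) : ℂ)) *
      (star (h.eigenvectorUnitary : Mat d n))
  else 0

/-- Matrix base-2 logarithm via the functional calculus, taken on the support. -/
def mlog {d n : ℕ} (A : Mat d n) : Mat d n :=
  if h : A.IsHermitian then
    (h.eigenvectorUnitary : Mat d n) *
      Matrix.diagonal (fun i => ((Real.logb 2 (h.eigenvalues i) : ℝ) : ℂ)) *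
      (star (h.eigenvectorUnitary : Mat d n))
  else 0

/-- The Petz quasi-divergence quantity `tr[ρ^α σ^{1-α}]`. -/
def qPetz {d n : ℕ} (α : ℝ) (ρ σ : Mat d n) : ℝ :=
  (mpow ρ α * mpow σ (1 - α)).trace.re

/-- The Petz Rényi divergence (base-2), `+∞` unless `supp ρ ⊆ supp σ`. -/
def DPetz {d n : ℕ} (α : ℝ) (ρ σ : Mat d n) : EReal :=
  if suppLE ρ σ then (((α - 1)⁻¹ * Real.logb 2 (qPetz α ρ σ) : ℝ) : EReal) else ⊤

/-- The sandwiched quasi-divergence quantity `tr[(σ^{(1-α)/(2α)} ρ σ^{(1-α)/(2α)})^α]`. -/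
def qSand {d n : ℕ} (α : ℝ) (ρ σ : Mat d n) : ℝ :=
  (mpow (mpow σ ((1 - α) / (2 * α)) * ρ * mpow σ ((1 - α) / (2 * α))) α).trace.re

/-- The sandwiched Rényi divergence (base-2), `+∞` unless `supp ρ ⊆ supp σ`. -/
def DSand {d n : ℕ} (α : ℝ) (ρ σ : Mat d n) : EReal :=
  if suppLE ρ σ then (((α - 1)⁻¹ * Real.logb 2 (qSand α ρ σ) : ℝ) : EReal) else ⊤

/-- The quantum Hoeffding divergence `H_{n,r}(ρ‖σ)`. -/
def Hoeffding {d : ℕ} (n : ℕ) (r : ℝ) (ρ σ : Mat d n) : EReal :=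
  ⨆ α ∈ Set.Ioo (0 : ℝ) 1,
    (((α - 1) / α : ℝ) : EReal) * ((((n : ℝ) * r : ℝ) : EReal) - DPetz α ρ σ)

/-- The quantum Hoeffding anti-divergence `H*_{n,r}(ρ‖σ)`. -/
def HoeffdingA {d : ℕ} (n : ℕ) (r : ℝ) (ρ σ : Mat d n) : EReal :=
  ⨆ α ∈ Set.Ioi (1 : ℝ),
    (((α - 1) / α : ℝ) : EReal) * ((((n : ℝ) * r : ℝ) : EReal) - DSand α ρ σ)

/-- Petz Rényi divergence between two sets of states. -/
def DPetzSet {d n : ℕ} (α : ℝ) (A B : Set (Mat d n)) : EReal :=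
  ⨅ ρ ∈ A, ⨅ σ ∈ B, DPetz α ρ σ

/-- Sandwiched Rényi divergence between two sets of states. -/
def DSandSet {d n : ℕ} (α : ℝ) (A B : Set (Mat d n)) : EReal :=
  ⨅ ρ ∈ A, ⨅ σ ∈ B, DSand α ρ σ

/-- Quantum Hoeffding divergence between two sets of states. -/
def HoeffdingSet {d : ℕ} (n : ℕ) (r : ℝ) (A B : Set (Mat d n)) : EReal :=
  ⨅ ρ ∈ A, ⨅ σ ∈ B, Hoeffding n r ρ σ

/-- Quantum Hoeffding anti-divergence between two sets of states. -/
def HoeffdingASet {d : ℕ} (n : ℕ) (r : ℝ) (A B : Set (Mat d n)) : EReal :=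
  ⨆ ρ ∈ A, ⨆ σ ∈ B, HoeffdingA n r ρ σ

/-- A test (two-outcome POVM element): `0 ≤ M ≤ I`. -/
def IsTest {d n : ℕ} (M : Mat d n) : Prop := M.PosSemidef ∧ (1 - M).PosSemidef

/-- Worst-case type-I error of a test `M` for the set `A`. -/
def typeI {d n : ℕ} (A : Set (Mat d n)) (M : Mat d n) : ℝ :=
  ⨆ ρ ∈ A, (ρ * (1 - M)).trace.re

/-- Worst-case type-II error of a test `M` for the set `B`. -/
def typeII {d n : ℕ} (B : Set (Mat d n)) (M : Mat d n) : ℝ :=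
  ⨆ σ ∈ B, (σ * M).trace.re

/-- Optimal type-I error at type-II error exponent `r`:
`α_{n,r}(A‖B) = inf { α(A,M) : 0 ≤ M ≤ I, β(B,M) ≤ 2^{-nr} }`. -/
def optAlpha {d : ℕ} (n : ℕ) (r : ℝ) (A B : Set (Mat d n)) : ℝ :=
  sInf {x | ∃ M : Mat d n, IsTest M ∧ typeII B M ≤ (2 : ℝ) ^ (-((n : ℝ) * r)) ∧ x = typeI A M}

/-- Optimal type-I error for a single pair of states. -/
def optAlphaPair {d : ℕ} (n : ℕ) (r : ℝ) (ρ σ : Mat d n) : ℝ :=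
  optAlpha n r {ρ} {σ}

/-- `- log₂ x` as an extended real, with `-log₂ 0 = +∞`. -/
def negLog2 (x : ℝ) : EReal := if x = 0 then ⊤ else ((-Real.logb 2 x : ℝ) : EReal)

/-- A sequence of sets of operators is stable under tensor product. -/
def Stable {d : ℕ} (A : ∀ n : ℕ, Set (Mat d n)) : Prop :=
  ∀ m n : ℕ, ∀ X ∈ A m, ∀ Y ∈ A n, tensorProd X Y ∈ A (m + n)

/-- Invariance under conjugation by the unitaries permuting the tensor factors. -/
def PermInvariant {d n : ℕ} (C : Set (Mat d n)) : Prop :=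
  ∀ π : Equiv.Perm (Fin n), ∀ M ∈ C,
    Matrix.of (fun f g : TIdx d n => M (f ∘ π) (g ∘ π)) ∈ C

/-- The polar of a set of positive semidefinite operators. -/
def polar {d n : ℕ} (C : Set (Mat d n)) : Set (Mat d n) :=
  {X | X.PosSemidef ∧ ∀ Y ∈ C, (X * Y).trace.re ≤ 1}

/-- Max-relative entropy between two sets (base-2):
`inf_{ρ∈A,σ∈B} log inf {λ ≥ 0 : ρ ≤ λσ}`. -/
def DmaxSet {d n : ℕ} (A B : Set (Mat d n)) : EReal :=
  ⨅ ρ ∈ A, ⨅ σ ∈ B, ⨅ lam ∈ {l : ℝ | 0 ≤ l ∧ (l • σ - ρ).PosSemidef},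
    ((Real.logb 2 lam : ℝ) : EReal)

/-- Umegaki relative entropy (base-2), `+∞` unless `supp ρ ⊆ supp σ`. -/
def DUm {d n : ℕ} (ρ σ : Mat d n) : EReal :=
  if suppLE ρ σ then (((ρ * (mlog ρ - mlog σ)).trace.re : ℝ) : EReal) else ⊤

/-- Umegaki relative entropy between two sets. -/
def DUmSet {d n : ℕ} (A B : Set (Mat d n)) : EReal :=
  ⨅ ρ ∈ A, ⨅ σ ∈ B, DUm ρ σ

/-- Spectral projection onto the nonnegative eigenspace of a matrix
(junk value `0` for non-Hermitian input). -/
def posProj {d n : ℕ} (X : Mat d n) : Mat d n :=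
  if h : X.IsHermitian then
    (h.eigenvectorUnitary : Mat d n) *
      Matrix.diagonal (fun i => if 0 ≤ h.eigenvalues i then (1 : ℂ) else 0) *
      (star (h.eigenvectorUnitary : Mat d n))
  else 0


namespace HoeffdingSub
open Matrix
variable {d m n : ℕ}

/-! ### Tensor product algebra -/

/-- The equivalence splitting an index of `H^{⊗(m+n)}`. -/
def splitIdx (d m n : ℕ) : TIdx d (m+n) ≃ TIdx d m × TIdx d n where
  toFun h := (fun i => h (Fin.castAdd n i), fun j => h (Fin.natAdd m j))
  invFun p := Fin.append p.1 p.2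
  left_inv h := by
    funext i
    refine Fin.addCases (fun i => ?_) (fun j => ?_) i
    · simp [Fin.append_left]
    · simp [Fin.append_right]
  right_inv p := by
    ext i
    · simp [Fin.append_left]
    · simp [Fin.append_right]

lemma tensorProd_apply (A : Mat d m) (B : Mat d n) (f g : TIdx d (m+n)) :
    tensorProd A B f g = A ((splitIdx d m n f).1) ((splitIdx d m n g).1) *
      B ((splitIdx d m n f).2) ((splitIdx d m n g).2) := rfl

lemma tensorProd_mul (A A' : Mat d m) (B B' : Mat d n) :
    tensorProd A B * tensorProd A' B' = tensorProd (A * A') (B * B') := by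
  ext f g
  rw [Matrix.mul_apply]
  rw [← Equiv.sum_comp (splitIdx d m n).symm]
  rw [Fintype.sum_prod_type]
  simp only [tensorProd_apply, Equiv.apply_symm_apply, Matrix.mul_apply]
  rw [Finset.sum_mul_sum]
  congr 1; ext a; congr 1; ext b; ring

lemma tensorProd_trace (A : Mat d m) (B : Mat d n) :
    (tensorProd A B).trace = A.trace * B.trace := by
  unfold Matrix.trace
  rw [← Equiv.sum_comp (splitIdx d m n).symm]
  rw [Fintype.sum_prod_type]
  rw [Finset.sum_mul_sum]
  simp only [Matrix.diag]
  congr 1; ext a; congr 1; ext b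
  rw [tensorProd_apply]
  simp

lemma tensorProd_conjTranspose (A : Mat d m) (B : Mat d n) :
    (tensorProd A B)ᴴ = tensorProd Aᴴ Bᴴ := by
  ext f g
  simp [tensorProd_apply, Matrix.conjTranspose_apply, mul_comm]

lemma tensorProd_diagonal (a : TIdx d m → ℂ) (b : TIdx d n → ℂ) :
    tensorProd (Matrix.diagonal a) (Matrix.diagonal b) =
      Matrix.diagonal (fun h => a ((splitIdx d m n h).1) * b ((splitIdx d m n h).2)) := by
  ext f g
  by_cases hfg : f = g
  · subst hfg; simp [tensorProd_apply]
  · have : (splitIdx d m n f).1 ≠ (splitIdx d m n g).1 ∨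
        (splitIdx d m n f).2 ≠ (splitIdx d m n g).2 := by
      by_contra hc
      push_neg at hc
      exact hfg ((splitIdx d m n).injective (Prod.ext hc.1 hc.2))
    rcases this with h1 | h1 <;>
      simp [tensorProd_apply, Matrix.diagonal_apply_ne _ hfg, Matrix.diagonal_apply_ne, h1]

lemma tensorProd_one : (tensorProd (1 : Mat d m) (1 : Mat d n)) = 1 := by
  rw [← Matrix.diagonal_one, ← Matrix.diagonal_one, tensorProd_diagonal]
  simp

/-! ### Functional calculus -/

lemma funcalc_eq {A : Mat d n} (hA : A.IsHermitian)
    (U : Mat d n) (hU1 : star U * U = 1) (hU2 : U * star U = 1)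
    (e : TIdx d n → ℝ)
    (hdec : A = U * Matrix.diagonal (fun i => (e i : ℂ)) * star U) (f : ℝ → ℝ) :
    (hA.eigenvectorUnitary : Mat d n) *
        Matrix.diagonal (fun i => ((f (hA.eigenvalues i) : ℝ) : ℂ)) *
        star (hA.eigenvectorUnitary : Mat d n) =
      U * Matrix.diagonal (fun i => ((f (e i) : ℝ) : ℂ)) * star U := by
  set V : Mat d n := (hA.eigenvectorUnitary : Mat d n) with hV
  have hV1 : star V * V = 1 := Matrix.mem_unitaryGroup_iff'.mp (hA.eigenvectorUnitary).2
  have hV2 : V * star V = 1 := Matrix.mem_unitaryGroup_iff.mp (hA.eigenvectorUnitary).2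
  set Dl : Mat d n := Matrix.diagonal (fun i => ((hA.eigenvalues i : ℝ) : ℂ)) with hDl
  set Ee : Mat d n := Matrix.diagonal (fun i => (e i : ℂ)) with hEe
  have hspec : A = V * Dl * star V := by
    simpa [hV, hDl, Function.comp_def] using hA.spectral_theorem
  set W : Mat d n := star U * V with hW
  have h1 : V * Dl = A * V := by
    rw [hspec]; rw [mul_assoc, mul_assoc, hV1, mul_one]
  have h2 : star U * A = Ee * star U := by
    rw [hdec]; rw [← mul_assoc, ← mul_assoc, hU1, one_mul]
  have hcomm : W * Dl = Ee * W := by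
    rw [hW, mul_assoc, h1, ← mul_assoc, h2, mul_assoc]
  have hentry : ∀ i j, W i j * ((hA.eigenvalues j : ℝ) : ℂ) = ((e i : ℝ) : ℂ) * W i j := by
    intro i j
    have := congrFun (congrFun hcomm i) j
    simpa [hDl, hEe, Matrix.mul_diagonal, Matrix.diagonal_mul] using this
  have hfcomm : W * Matrix.diagonal (fun i => ((f (hA.eigenvalues i) : ℝ) : ℂ)) =
      Matrix.diagonal (fun i => ((f (e i) : ℝ) : ℂ)) * W := by
    ext i j
    simp only [Matrix.mul_diagonal, Matrix.diagonal_mul]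
    by_cases hw : W i j = 0
    · simp [hw]
    · have h' : W i j * ((hA.eigenvalues j : ℝ) : ℂ) = W i j * ((e i : ℝ) : ℂ) :=
        (hentry i j).trans (mul_comm _ _)
      have : hA.eigenvalues j = e i := by exact_mod_cast mul_left_cancel₀ hw h'
      rw [this, mul_comm]
  have hUW : U * W = V := by rw [hW, ← mul_assoc, hU2, one_mul]
  have hWV : W * star V = star U := by rw [hW, mul_assoc, hV2, mul_one]
  set Df : Mat d n := Matrix.diagonal (fun i => ((f (hA.eigenvalues i) : ℝ) : ℂ)) with hDf
  set De : Mat d n := Matrix.diagonal (fun i => ((f (e i) : ℝ) : ℂ)) with hDe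
  have key : U * (W * Df) * star V = U * (De * W) * star V := by rw [hfcomm]
  have lhs : U * (W * Df) * star V = V * Df * star V := by
    rw [← mul_assoc U W Df, hUW]
  have rhs : U * (De * W) * star V = U * De * star U := by
    rw [← mul_assoc U De W, mul_assoc (U * De) W (star V), hWV]
  exact lhs.symm.trans (key.trans rhs)

lemma mpow_eq_decomp {A : Mat d n} (hA : A.IsHermitian)
    (U : Mat d n) (hU1 : star U * U = 1) (hU2 : U * star U = 1)
    (e : TIdx d n → ℝ)
    (hdec : A = U * Matrix.diagonal (fun i => (e i : ℂ)) * star U) (p : ℝ) :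
    mpow A p = U * Matrix.diagonal (fun i => ((e i ^ p : ℝ) : ℂ)) * star U := by
  rw [mpow, dif_pos hA]
  exact funcalc_eq hA U hU1 hU2 e hdec (fun x => x ^ p)

lemma conj_diag_isHermitian (U : Mat d n) (g : TIdx d n → ℝ) :
    (U * Matrix.diagonal (fun i => (g i : ℂ)) * star U).IsHermitian := by
  have : star (fun i => (g i : ℂ)) = fun i => (g i : ℂ) := by
    funext i; simp [Complex.conj_ofReal]
  simp [Matrix.IsHermitian, Matrix.star_eq_conjTranspose, Matrix.conjTranspose_mul,
    Matrix.diagonal_conjTranspose, this, mul_assoc]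

lemma conj_diag_posSemidef (U : Mat d n) (g : TIdx d n → ℝ) (hg : ∀ i, 0 ≤ g i) :
    (U * Matrix.diagonal (fun i => (g i : ℂ)) * star U).PosSemidef := by
  have hd : (Matrix.diagonal (fun i => (g i : ℂ))).PosSemidef :=
    Matrix.posSemidef_diagonal_iff.mpr fun i => Complex.zero_le_real.mpr (hg i)
  simpa [Matrix.star_eq_conjTranspose] using hd.mul_mul_conjTranspose_same U

lemma conj_diag_trace (U : Mat d n) (hU1 : star U * U = 1) (g : TIdx d n → ℝ) :
    (U * Matrix.diagonal (fun i => (g i : ℂ)) * star U).trace = ((∑ i, g i : ℝ) : ℂ) := by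
  rw [Matrix.trace_mul_cycle, hU1, one_mul, Matrix.trace_diagonal]
  push_cast
  rfl

lemma mpow_isHermitian {A : Mat d n} (hA : A.IsHermitian) (p : ℝ) :
    (mpow A p).IsHermitian := by
  rw [mpow, dif_pos hA]; exact conj_diag_isHermitian _ _

lemma mpow_posSemidef {A : Mat d n} (hA : A.PosSemidef) (p : ℝ) :
    (mpow A p).PosSemidef := by
  rw [mpow, dif_pos hA.1]
  exact conj_diag_posSemidef _ _ fun i => Real.rpow_nonneg (hA.eigenvalues_nonneg i) p

lemma unit1 {A : Mat d n} (hA : A.IsHermitian) :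
    star (hA.eigenvectorUnitary : Mat d n) * (hA.eigenvectorUnitary : Mat d n) = 1 :=
  Matrix.mem_unitaryGroup_iff'.mp (hA.eigenvectorUnitary).2

lemma unit2 {A : Mat d n} (hA : A.IsHermitian) :
    (hA.eigenvectorUnitary : Mat d n) * star (hA.eigenvectorUnitary : Mat d n) = 1 :=
  Matrix.mem_unitaryGroup_iff.mp (hA.eigenvectorUnitary).2

lemma spectral' {A : Mat d n} (hA : A.IsHermitian) :
    A = (hA.eigenvectorUnitary : Mat d n) *
        Matrix.diagonal (fun i => ((hA.eigenvalues i : ℝ) : ℂ)) *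
        star (hA.eigenvectorUnitary : Mat d n) := by
  simpa [Function.comp_def] using hA.spectral_theorem

lemma mpow_one' {A : Mat d n} (hA : A.IsHermitian) : mpow A 1 = A := by
  rw [mpow, dif_pos hA]
  simp only [Real.rpow_one]
  exact (spectral' hA).symm

lemma mpow_mul_mpow {A : Mat d n} (hA : A.PosSemidef) {p q : ℝ} (hp : 0 < p) (hq : 0 < q) :
    mpow A p * mpow A q = mpow A (p + q) := by
  rw [mpow, dif_pos hA.1, mpow, dif_pos hA.1, mpow, dif_pos hA.1]
  have h1 : ∀ (X Y : Mat d n), ((hA.1.eigenvectorUnitary : Mat d n) * X *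
      star (hA.1.eigenvectorUnitary : Mat d n)) * ((hA.1.eigenvectorUnitary : Mat d n) * Y *
      star (hA.1.eigenvectorUnitary : Mat d n)) = (hA.1.eigenvectorUnitary : Mat d n) * (X * Y) *
      star (hA.1.eigenvectorUnitary : Mat d n) := by
    intro X Y
    have := unit1 hA.1
    calc _ = (hA.1.eigenvectorUnitary : Mat d n) * X *
        ((star (hA.1.eigenvectorUnitary : Mat d n) * (hA.1.eigenvectorUnitary : Mat d n)) * Y *
        star (hA.1.eigenvectorUnitary : Mat d n)) := by
          simp only [mul_assoc]
      _ = _ := by rw [this]; simp only [one_mul, mul_assoc]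
  rw [h1, Matrix.diagonal_mul_diagonal]
  have : (fun i => ((hA.1.eigenvalues i ^ p : ℝ) : ℂ) * ((hA.1.eigenvalues i ^ q : ℝ) : ℂ))
      = fun i => ((hA.1.eigenvalues i ^ (p + q) : ℝ) : ℂ) := by
    funext i
    rw [← Complex.ofReal_mul, ← Real.rpow_add' (hA.eigenvalues_nonneg i) (by positivity)]
  rw [this]

lemma mpow_ker {A : Mat d n} (hA : A.PosSemidef) {p : ℝ} (hp : 0 < p) (v : TIdx d n → ℂ)
    (h : (mpow A p).mulVec v = 0) : A.mulVec v = 0 := by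
  set V : Mat d n := (hA.1.eigenvectorUnitary : Mat d n)
  set w : TIdx d n → ℂ := (star V).mulVec v with hw
  have hdg : ∀ i, ((hA.1.eigenvalues i ^ p : ℝ) : ℂ) * w i = 0 := by
    intro i
    have h0 : (Matrix.diagonal (fun i => ((hA.1.eigenvalues i ^ p : ℝ) : ℂ)) * star V).mulVec v
        = 0 := by
      have : (star V * ((V * Matrix.diagonal (fun i => ((hA.1.eigenvalues i ^ p : ℝ) : ℂ)))
          * star V)).mulVec v = 0 := by
        rw [← Matrix.mulVec_mulVec]
        have : ((V * Matrix.diagonal (fun i => ((hA.1.eigenvalues i ^ p : ℝ) : ℂ))) * star V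
            ).mulVec v = 0 := by
          rw [mpow, dif_pos hA.1] at h
          rw [mul_assoc]
          rw [mul_assoc] at h
          exact h
        rw [this, Matrix.mulVec_zero]
      rwa [← mul_assoc, ← mul_assoc, unit1 hA.1, one_mul] at this
    have := congrFun h0 i
    rw [← Matrix.mulVec_mulVec] at this
    simpa [Matrix.mulVec_diagonal, hw] using this
  have hdg' : ∀ i, ((hA.1.eigenvalues i : ℝ) : ℂ) * w i = 0 := by
    intro i
    rcases mul_eq_zero.mp (hdg i) with h1 | h1
    · have : hA.1.eigenvalues i ^ p = 0 := by exact_mod_cast h1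
      have : hA.1.eigenvalues i = 0 :=
        (Real.rpow_eq_zero (hA.eigenvalues_nonneg i) (ne_of_gt hp)).mp this
      simp [this]
    · simp [h1]
  have hDw : (Matrix.diagonal (fun i => ((hA.1.eigenvalues i : ℝ) : ℂ))).mulVec w = 0 := by
    funext i
    simpa [Matrix.mulVec_diagonal] using hdg' i
  calc A.mulVec v = (V * Matrix.diagonal (fun i => ((hA.1.eigenvalues i : ℝ) : ℂ)) *
      star V).mulVec v := by rw [← spectral' hA.1]
    _ = V.mulVec ((Matrix.diagonal (fun i => ((hA.1.eigenvalues i : ℝ) : ℂ))).mulVec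
        ((star V).mulVec v)) := by rw [Matrix.mulVec_mulVec, Matrix.mulVec_mulVec, mul_assoc]
    _ = 0 := by rw [← hw, hDw, Matrix.mulVec_zero]

/-! ### mpow of tensor products -/

lemma mpow_tensor {A : Mat d m} {B : Mat d n} (hA : A.PosSemidef) (hB : B.PosSemidef) (p : ℝ) :
    mpow (tensorProd A B) p = tensorProd (mpow A p) (mpow B p) := by
  set UA : Mat d m := (hA.1.eigenvectorUnitary : Mat d m) with hUA
  set UB : Mat d n := (hB.1.eigenvectorUnitary : Mat d n) with hUB
  set U : Mat d (m+n) := tensorProd UA UB with hU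
  set e : TIdx d (m+n) → ℝ :=
    fun h => hA.1.eigenvalues ((splitIdx d m n h).1) * hB.1.eigenvalues ((splitIdx d m n h).2)
    with he
  have hstar : star U = tensorProd (star UA) (star UB) := by
    rw [hU, Matrix.star_eq_conjTranspose, tensorProd_conjTranspose]
    rfl
  have hU1 : star U * U = 1 := by
    rw [hstar, hU, tensorProd_mul, unit1 hA.1, unit1 hB.1, tensorProd_one]
  have hU2 : U * star U = 1 := by
    rw [hstar, hU, tensorProd_mul, unit2 hA.1, unit2 hB.1, tensorProd_one]
  have hdiag : ∀ f : TIdx d m → ℝ, ∀ g : TIdx d n → ℝ,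
      tensorProd (Matrix.diagonal fun i => ((f i : ℝ) : ℂ))
        (Matrix.diagonal fun j => ((g j : ℝ) : ℂ)) =
      Matrix.diagonal (fun h => ((f ((splitIdx d m n h).1) * g ((splitIdx d m n h).2) : ℝ) : ℂ)) := by
    intro f g
    rw [tensorProd_diagonal]
    push_cast
    rfl
  have hdec : tensorProd A B = U * Matrix.diagonal (fun i => (e i : ℂ)) * star U := by
    conv_lhs => rw [spectral' hA.1, spectral' hB.1]
    rw [← hUA, ← hUB, ← tensorProd_mul, ← tensorProd_mul, hstar, hU]
    congr 1
    have := hdiag (fun i => hA.1.eigenvalues i) (fun j => hB.1.eigenvalues j)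
    rw [this]
  have hherm : (tensorProd A B).IsHermitian := by
    rw [hdec]; exact conj_diag_isHermitian _ _
  rw [mpow_eq_decomp hherm U hU1 hU2 e hdec p]
  rw [mpow, dif_pos hA.1, mpow, dif_pos hB.1]
  rw [← hUA, ← hUB, ← tensorProd_mul, ← tensorProd_mul, hstar, hU]
  rw [hdiag (fun i => hA.1.eigenvalues i ^ p) (fun j => hB.1.eigenvalues j ^ p)]
  have harg : (fun i => ((e i ^ p : ℝ) : ℂ)) =
      fun h => ((hA.1.eigenvalues ((splitIdx d m n h).1) ^ p *
        hB.1.eigenvalues ((splitIdx d m n h).2) ^ p : ℝ) : ℂ) := by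
    funext h
    simp only [he]
    rw [Real.mul_rpow (hA.eigenvalues_nonneg _) (hB.eigenvalues_nonneg _)]
  rw [harg]

/-! ### Traces of products of PSD matrices -/

lemma trace_CHC {J K : Type*} [Fintype J] [Fintype K] (M : Matrix J K ℂ) :
    (Mᴴ * M).trace = ((∑ k, ∑ j, Complex.normSq (M j k) : ℝ) : ℂ) := by
  unfold Matrix.trace
  push_cast
  congr 1
  funext k
  rw [Matrix.diag]
  rw [Matrix.mul_apply]
  congr 1
  funext j
  rw [Matrix.conjTranspose_apply]
  rw [mul_comm]
  exact Complex.mul_conj (M j k)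

lemma trace_mul_herm_real {X Y : Mat d n} (hX : X.IsHermitian) (hY : Y.IsHermitian) :
    (X * Y).trace = (((X * Y).trace.re : ℝ) : ℂ) := by
  have h1 : star ((X * Y).trace) = (X * Y).trace := by
    rw [← Matrix.trace_conjTranspose, Matrix.conjTranspose_mul, hX.eq, hY.eq,
      Matrix.trace_mul_comm]
  have h2 : (X * Y).trace.im = 0 := by
    have := congrArg Complex.im h1
    simp only [Complex.star_def, Complex.conj_im] at this
    linarith
  exact (Complex.re_add_im _).symm.trans (by rw [h2]; simp)

lemma trace_mul_psd_eq {P Q : Mat d n} (hP : P.PosSemidef) (hQ : Q.PosSemidef) :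
    (P * Q).trace = ((mpow Q (1/2) * mpow P (1/2))ᴴ * (mpow Q (1/2) * mpow P (1/2))).trace := by
  set R := mpow P (1/2) with hR
  set S := mpow Q (1/2) with hS
  have hRh : Rᴴ = R := mpow_isHermitian hP.1 _
  have hSh : Sᴴ = S := mpow_isHermitian hQ.1 _
  have h1 : (S * R)ᴴ * (S * R) = R * (S * S) * R := by
    rw [Matrix.conjTranspose_mul, hRh, hSh]
    simp only [mul_assoc]
  have hPR : P = R * R := by
    rw [hR, mpow_mul_mpow hP (by norm_num) (by norm_num), show (1/2:ℝ) + 1/2 = 1 by norm_num,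
      mpow_one' hP.1]
  have hQS : Q = S * S := by
    rw [hS, mpow_mul_mpow hQ (by norm_num) (by norm_num), show (1/2:ℝ) + 1/2 = 1 by norm_num,
      mpow_one' hQ.1]
  rw [h1]
  conv_lhs => rw [hPR, hQS]
  rw [Matrix.trace_mul_comm (R * (S * S)) R]
  simp only [mul_assoc]

lemma trace_mul_psd_re_nonneg {P Q : Mat d n} (hP : P.PosSemidef) (hQ : Q.PosSemidef) :
    0 ≤ ((P * Q).trace).re := by
  rw [trace_mul_psd_eq hP hQ, trace_CHC]
  rw [Complex.ofReal_re]
  exact Finset.sum_nonneg fun k _ => Finset.sum_nonneg fun j _ => Complex.normSq_nonneg _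

lemma qPetz_nonneg {ρ σ : Mat d n} (hρ : ρ.PosSemidef) (hσ : σ.PosSemidef) (α : ℝ) :
    0 ≤ qPetz α ρ σ :=
  trace_mul_psd_re_nonneg (mpow_posSemidef hρ α) (mpow_posSemidef hσ (1 - α))

/-! ### suppLE and tensor products -/

/-- reshaping a vector on `H^{⊗(m+n)}` into a matrix -/
def vmat {d m n : ℕ} (v : TIdx d (m+n) → ℂ) : Matrix (TIdx d m) (TIdx d n) ℂ :=
  Matrix.of fun f g => v (Fin.append f g)

lemma tensor_mulVec (A : Mat d m) (B : Mat d n) (v : TIdx d (m+n) → ℂ) (h : TIdx d (m+n)) :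
    (tensorProd A B).mulVec v h =
      (A * vmat v * Bᵀ) ((splitIdx d m n h).1) ((splitIdx d m n h).2) := by
  simp only [Matrix.mulVec, dotProduct, Matrix.mul_apply, Finset.sum_mul]
  rw [← Equiv.sum_comp (splitIdx d m n).symm]
  rw [Fintype.sum_prod_type]
  rw [Finset.sum_comm]
  congr 1
  funext g
  congr 1
  funext f
  rw [tensorProd_apply]
  simp only [Equiv.apply_symm_apply]
  have hv : v ((splitIdx d m n).symm (f, g)) = vmat v f g := rfl
  rw [hv]
  simp only [Matrix.transpose_apply]
  ring

lemma tensor_mulVec_zero_iff (A : Mat d m) (B : Mat d n) (v : TIdx d (m+n) → ℂ) :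
    (tensorProd A B).mulVec v = 0 ↔ A * vmat v * Bᵀ = 0 := by
  constructor
  · intro h0
    ext f g
    have := congrFun h0 ((splitIdx d m n).symm (f, g))
    rw [tensor_mulVec] at this
    simpa using this
  · intro h0
    funext h
    rw [tensor_mulVec, h0]
    rfl

lemma mul_left_of_suppLE {k : ℕ} {J : Type*} [Fintype J] {ρ σ : Mat d k} (hs : suppLE ρ σ)
    (X : Matrix (TIdx d k) J ℂ) (h : σ * X = 0) : ρ * X = 0 := by
  ext i j
  have hcol : σ.mulVec (fun a => X a j) = 0 := by
    funext i'
    simpa [Matrix.mulVec, dotProduct, Matrix.mul_apply] using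
      congrFun (congrFun h i') j
  have := congrFun (hs _ hcol) i
  simpa [Matrix.mulVec, dotProduct, Matrix.mul_apply] using this

lemma suppLE_tensor {ρ1 σ1 : Mat d m} {ρ2 σ2 : Mat d n} (h1 : suppLE ρ1 σ1)
    (h2 : suppLE ρ2 σ2) : suppLE (tensorProd ρ1 ρ2) (tensorProd σ1 σ2) := by
  intro v hv
  rw [tensor_mulVec_zero_iff] at hv ⊢
  have ha : σ1 * (vmat v * σ2ᵀ) = 0 := by rw [← Matrix.mul_assoc]; exact hv
  have hb : ρ1 * (vmat v * σ2ᵀ) = 0 := mul_left_of_suppLE h1 _ ha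
  have hc : σ2 * (ρ1 * vmat v)ᵀ = 0 := by
    have hb' : (ρ1 * vmat v) * σ2ᵀ = 0 := by rw [Matrix.mul_assoc]; exact hb
    have := congrArg Matrix.transpose hb'
    simpa [Matrix.transpose_mul] using this
  have hd : ρ2 * (ρ1 * vmat v)ᵀ = 0 := mul_left_of_suppLE h2 _ hc
  have := congrArg Matrix.transpose hd
  simp only [Matrix.transpose_mul, Matrix.transpose_transpose, Matrix.transpose_zero] at this
  exact this

/-! ### qPetz multiplicativity and positivity -/

lemma qPetz_tensor {ρ1 σ1 : Mat d m} {ρ2 σ2 : Mat d n} (hρ1 : ρ1.PosSemidef)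
    (hσ1 : σ1.PosSemidef) (hρ2 : ρ2.PosSemidef) (hσ2 : σ2.PosSemidef) (α : ℝ) :
    qPetz α (tensorProd ρ1 ρ2) (tensorProd σ1 σ2) = qPetz α ρ1 σ1 * qPetz α ρ2 σ2 := by
  unfold qPetz
  rw [mpow_tensor hρ1 hρ2, mpow_tensor hσ1 hσ2, tensorProd_mul, tensorProd_trace]
  rw [trace_mul_herm_real (mpow_isHermitian hρ1.1 α) (mpow_isHermitian hσ1.1 (1 - α)),
    trace_mul_herm_real (mpow_isHermitian hρ2.1 α) (mpow_isHermitian hσ2.1 (1 - α))]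
  rw [← Complex.ofReal_mul]
  simp

lemma qPetz_pos {k : ℕ} {ρ σ : Mat d k} (hρ : IsState ρ) (hσ : σ.PosSemidef)
    (hs : suppLE ρ σ) {α : ℝ} (hα0 : 0 < α) (hα1 : α < 1) : 0 < qPetz α ρ σ := by
  rcases lt_or_eq_of_le (qPetz_nonneg hρ.1 hσ α) with h | h
  · exact h
  exfalso
  set R := mpow ρ (α/2) with hR
  set S := mpow σ ((1-α)/2) with hS
  have hPR : mpow ρ α = R * R := by
    rw [hR, mpow_mul_mpow hρ.1 (by linarith) (by linarith)]
    norm_num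
  have hQS : mpow σ (1-α) = S * S := by
    rw [hS, mpow_mul_mpow hσ (by linarith) (by linarith)]
    norm_num
  have hRh : Rᴴ = R := mpow_isHermitian hρ.1.1 _
  have hSh : Sᴴ = S := mpow_isHermitian hσ.1 _
  have htr : (mpow ρ α * mpow σ (1-α)).trace = ((S * R)ᴴ * (S * R)).trace := by
    rw [hPR, hQS]
    have h1 : (S * R)ᴴ * (S * R) = R * (S * S) * R := by
      rw [Matrix.conjTranspose_mul, hRh, hSh]
      simp only [mul_assoc]
    rw [h1, Matrix.trace_mul_comm (R * (S * S)) R]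
    simp only [mul_assoc]
  have hSR : S * R = 0 := by
    have h0 : ((S * R)ᴴ * (S * R)).trace.re = 0 := by
      have hq : (mpow ρ α * mpow σ (1 - α)).trace.re = 0 := by
        have := h.symm
        rwa [qPetz] at this
      rwa [htr] at hq
    rw [trace_CHC, Complex.ofReal_re] at h0
    ext i j
    have hterm : ∀ jj ii, (0:ℝ) ≤ Complex.normSq ((S * R) ii jj) := fun _ _ => Complex.normSq_nonneg _
    have := (Finset.sum_eq_zero_iff_of_nonneg (fun jj _ =>
      Finset.sum_nonneg fun ii _ => hterm jj ii)).mp h0 j (Finset.mem_univ j)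
    have := (Finset.sum_eq_zero_iff_of_nonneg (fun ii _ => hterm j ii)).mp this i
      (Finset.mem_univ i)
    simpa [Complex.normSq_eq_zero] using this
  -- σ kills columns of R
  have hσR : σ * R = 0 := by
    ext i j
    have hcol : S.mulVec (fun a => R a j) = 0 := by
      funext i'
      simpa [Matrix.mulVec, dotProduct, Matrix.mul_apply] using
        congrFun (congrFun hSR i') j
    have hker := mpow_ker hσ (by linarith : (0:ℝ) < (1-α)/2) _ hcol
    simpa [Matrix.mulVec, dotProduct, Matrix.mul_apply] using congrFun hker i
  have hρR : ρ * R = 0 := mul_left_of_suppLE hs R hσR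
  have hfull : mpow ρ (1 + α/2) = 0 := by
    rw [← mpow_mul_mpow hρ.1 (by norm_num) (by linarith : (0:ℝ) < α/2), mpow_one' hρ.1.1, hρR]
  have htr0 : ((∑ i, hρ.1.1.eigenvalues i ^ (1 + α/2) : ℝ) : ℂ) = 0 := by
    calc ((∑ i, hρ.1.1.eigenvalues i ^ (1 + α/2) : ℝ) : ℂ)
        = (mpow ρ (1 + α/2)).trace := by
          rw [mpow, dif_pos hρ.1.1]
          exact (conj_diag_trace _ (unit1 hρ.1.1) _).symm
      _ = 0 := by rw [hfull]; simp
  have hsum : ∑ i, hρ.1.1.eigenvalues i ^ (1 + α/2) = 0 := by exact_mod_cast htr0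
  have heig : ∀ i, hρ.1.1.eigenvalues i = 0 := by
    intro i
    have := (Finset.sum_eq_zero_iff_of_nonneg (fun i _ =>
      Real.rpow_nonneg (hρ.1.eigenvalues_nonneg i) _)).mp hsum i (Finset.mem_univ i)
    exact (Real.rpow_eq_zero (hρ.1.eigenvalues_nonneg i) (by linarith)).mp this
  have htrρ : ρ.trace = ((∑ i, hρ.1.1.eigenvalues i : ℝ) : ℂ) := by
    conv_lhs => rw [spectral' hρ.1.1]
    exact conj_diag_trace _ (unit1 hρ.1.1) _
  have hone : ((∑ i, hρ.1.1.eigenvalues i : ℝ) : ℂ) = 1 := htrρ.symm.trans hρ.2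
  have : (∑ i, hρ.1.1.eigenvalues i : ℝ) = 1 := by exact_mod_cast hone
  rw [Finset.sum_congr rfl (fun i _ => heig i)] at this
  simp at this

/-! ### Uniform lower bound for the Hoeffding divergence -/

lemma state_eig_le_one {k : ℕ} {ρ : Mat d k} (hρ : IsState ρ) (i : TIdx d k) :
    hρ.1.1.eigenvalues i ≤ 1 := by
  have htrρ : ρ.trace = ((∑ i, hρ.1.1.eigenvalues i : ℝ) : ℂ) := by
    conv_lhs => rw [spectral' hρ.1.1]
    exact conj_diag_trace _ (unit1 hρ.1.1) _
  have hone : ((∑ i, hρ.1.1.eigenvalues i : ℝ) : ℂ) = 1 := htrρ.symm.trans hρ.2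
  have hsum : ∑ i, hρ.1.1.eigenvalues i = 1 := by exact_mod_cast hone
  calc hρ.1.1.eigenvalues i ≤ ∑ i, hρ.1.1.eigenvalues i :=
        Finset.single_le_sum (fun j _ => hρ.1.eigenvalues_nonneg j) (Finset.mem_univ i)
    _ = 1 := hsum

lemma qPetz_half_le {k : ℕ} {ρ σ : Mat d k} (hρ : IsState ρ) (hσ : IsState σ) :
    qPetz (1/2) ρ σ ≤ (Fintype.card (TIdx d k) : ℝ) := by
  set P := mpow ρ (1/2 : ℝ) with hP
  set S := mpow σ (1 - (1/2) : ℝ) with hS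
  have honesub : (1 - P).PosSemidef := by
    have h1 : (1 : Mat d k) = (hρ.1.1.eigenvectorUnitary : Mat d k) *
        Matrix.diagonal (fun _ => ((1:ℝ) : ℂ)) * star (hρ.1.1.eigenvectorUnitary : Mat d k) := by
      simp [unit2 hρ.1.1]
    have h2 : 1 - P = (hρ.1.1.eigenvectorUnitary : Mat d k) *
        Matrix.diagonal (fun i => ((1 - hρ.1.1.eigenvalues i ^ (1/2:ℝ) : ℝ) : ℂ)) *
        star (hρ.1.1.eigenvectorUnitary : Mat d k) := by
      rw [hP, mpow, dif_pos hρ.1.1]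
      conv_lhs => rw [h1]
      rw [← Matrix.sub_mul, ← Matrix.mul_sub, Matrix.diagonal_sub]
      congr 2
      funext i
      push_cast
      ring
    rw [h2]
    refine conj_diag_posSemidef _ _ fun i => ?_
    have := Real.rpow_le_one (hρ.1.eigenvalues_nonneg i) (state_eig_le_one hρ i)
      (by norm_num : (0:ℝ) ≤ 1/2)
    linarith
  have hSpsd : S.PosSemidef := mpow_posSemidef hσ.1 _
  have hPpsd : P.PosSemidef := mpow_posSemidef hρ.1 _
  have h0 : 0 ≤ (((1 - P) * S).trace).re := trace_mul_psd_re_nonneg honesub hSpsd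
  have hsplit : ((1 - P) * S).trace = S.trace - (P * S).trace := by
    rw [Matrix.sub_mul, Matrix.trace_sub, Matrix.one_mul]
  have hStr : S.trace = ((∑ i, hσ.1.1.eigenvalues i ^ ((1 : ℝ) - 1/2) : ℝ) : ℂ) := by
    rw [hS, mpow, dif_pos hσ.1.1]
    exact conj_diag_trace _ (unit1 hσ.1.1) _
  have hSre : S.trace.re ≤ (Fintype.card (TIdx d k) : ℝ) := by
    rw [hStr, Complex.ofReal_re]
    calc ∑ i, hσ.1.1.eigenvalues i ^ ((1:ℝ) - 1/2)
        ≤ ∑ _i : TIdx d k, (1:ℝ) := by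
          refine Finset.sum_le_sum fun i _ => ?_
          exact Real.rpow_le_one (hσ.1.eigenvalues_nonneg i) (state_eig_le_one hσ i)
            (by norm_num)
      _ = (Fintype.card (TIdx d k) : ℝ) := by simp
  have : qPetz (1/2) ρ σ = ((P * S).trace).re := rfl
  rw [this]
  have := h0
  rw [hsplit, Complex.sub_re] at this
  linarith

lemma card_pos_of_state {k : ℕ} {ρ : Mat d k} (hρ : IsState ρ) :
    (1 : ℝ) ≤ (Fintype.card (TIdx d k) : ℝ) := by
  by_contra hcon
  push_neg at hcon
  have hcard : Fintype.card (TIdx d k) = 0 := by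
    by_contra h0
    have : 1 ≤ Fintype.card (TIdx d k) := Nat.one_le_iff_ne_zero.mpr h0
    exact absurd hcon (not_lt.mpr (by exact_mod_cast this))
  have hemp : IsEmpty (TIdx d k) := Fintype.card_eq_zero_iff.mp hcard
  have : ρ.trace = 0 := by
    unfold Matrix.trace
    exact Finset.sum_of_isEmpty _
  rw [hρ.2] at this
  exact one_ne_zero this

lemma hoeffding_lb {k : ℕ} (r : ℝ) {ρ σ : Mat d k} (hρ : IsState ρ) (hσ : IsState σ) :
    ((-(2 * Real.logb 2 (Fintype.card (TIdx d k)) + k * r) : ℝ) : EReal) ≤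
      Hoeffding k r ρ σ := by
  have hmem : (1/2 : ℝ) ∈ Set.Ioo (0:ℝ) 1 := by norm_num
  refine le_trans ?_
    (le_biSup (fun α => ((((α : ℝ) - 1) / α : ℝ) : EReal) *
      ((((k : ℝ) * r : ℝ) : EReal) - DPetz α ρ σ)) hmem)
  beta_reduce
  by_cases hs : suppLE ρ σ
  · unfold DPetz
    rw [if_pos hs]
    rw [← EReal.coe_sub, ← EReal.coe_mul]
    rw [EReal.coe_le_coe_iff]
    have hQpos : 0 < qPetz (1/2) ρ σ := qPetz_pos hρ hσ.1 hs (by norm_num) (by norm_num)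
    have hQle : qPetz (1/2) ρ σ ≤ (Fintype.card (TIdx d k) : ℝ) := qPetz_half_le hρ hσ
    have hlog : Real.logb 2 (qPetz (1/2) ρ σ) ≤
        Real.logb 2 (Fintype.card (TIdx d k) : ℝ) := by
      rw [Real.logb_le_logb (by norm_num) hQpos (lt_of_lt_of_le hQpos hQle)]
      exact hQle
    have hc1 : (((1:ℝ)/2 - 1) / (1/2) : ℝ) = -1 := by norm_num
    have hc2 : (((1:ℝ)/2 - 1)⁻¹ : ℝ) = -2 := by norm_num
    rw [hc1, hc2]
    nlinarith [hlog]
  · unfold DPetz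
    rw [if_neg hs]
    rw [EReal.sub_top]
    have hneg : ((((1:ℝ)/2 - 1) / (1/2) : ℝ) : EReal) * (⊥ : EReal) = ⊤ :=
      EReal.coe_mul_bot_of_neg (by norm_num)
    rw [hneg]
    exact le_top

lemma hoeffding_ne_bot {k : ℕ} (r : ℝ) {ρ σ : Mat d k} (hρ : IsState ρ) (hσ : IsState σ) :
    Hoeffding k r ρ σ ≠ ⊥ :=
  fun h => by
    have := hoeffding_lb (d := d) r hρ hσ
    rw [h] at this
    exact (EReal.bot_lt_coe _).not_ge this

/-! ### The key pointwise inequality -/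

lemma hoeffding_top_of_not_suppLE {k : ℕ} (r : ℝ) {ρ σ : Mat d k} (hs : ¬ suppLE ρ σ) :
    Hoeffding k r ρ σ = ⊤ := by
  refine top_le_iff.mp ?_
  have hmem : (1/2 : ℝ) ∈ Set.Ioo (0:ℝ) 1 := by norm_num
  refine le_trans ?_
    (le_biSup (fun α => ((((α : ℝ) - 1) / α : ℝ) : EReal) *
      ((((k : ℝ) * r : ℝ) : EReal) - DPetz α ρ σ)) hmem)
  beta_reduce
  unfold DPetz
  rw [if_neg hs, EReal.sub_top]
  rw [EReal.coe_mul_bot_of_neg (by norm_num : (((1:ℝ)/2 - 1) / (1/2) : ℝ) < 0)]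

lemma hoeffding_tensor_le (r : ℝ) {ρ1 σ1 : Mat d m} {ρ2 σ2 : Mat d n}
    (hρ1 : IsState ρ1) (hσ1 : IsState σ1) (hρ2 : IsState ρ2) (hσ2 : IsState σ2) :
    Hoeffding (m + n) r (tensorProd ρ1 ρ2) (tensorProd σ1 σ2) ≤
      Hoeffding m r ρ1 σ1 + Hoeffding n r ρ2 σ2 := by
  by_cases hs1 : suppLE ρ1 σ1
  swap
  · rw [hoeffding_top_of_not_suppLE r hs1, EReal.top_add_of_ne_bot (hoeffding_ne_bot r hρ2 hσ2)]
    exact le_top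
  by_cases hs2 : suppLE ρ2 σ2
  swap
  · rw [hoeffding_top_of_not_suppLE r hs2, EReal.add_top_of_ne_bot (hoeffding_ne_bot r hρ1 hσ1)]
    exact le_top
  refine iSup₂_le fun α hα => ?_
  obtain ⟨hα0, hα1⟩ := hα
  have hsT : suppLE (tensorProd ρ1 ρ2) (tensorProd σ1 σ2) := suppLE_tensor hs1 hs2
  have hQmul : qPetz α (tensorProd ρ1 ρ2) (tensorProd σ1 σ2) =
      qPetz α ρ1 σ1 * qPetz α ρ2 σ2 := qPetz_tensor hρ1.1 hσ1.1 hρ2.1 hσ2.1 α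
  have hQ1 : 0 < qPetz α ρ1 σ1 := qPetz_pos hρ1 hσ1.1 hs1 hα0 hα1
  have hQ2 : 0 < qPetz α ρ2 σ2 := qPetz_pos hρ2 hσ2.1 hs2 hα0 hα1
  have t1le : ((((α : ℝ) - 1) / α : ℝ) : EReal) *
      ((((m : ℝ) * r : ℝ) : EReal) - DPetz α ρ1 σ1) ≤ Hoeffding m r ρ1 σ1 :=
    le_biSup (fun α => ((((α : ℝ) - 1) / α : ℝ) : EReal) *
      ((((m : ℝ) * r : ℝ) : EReal) - DPetz α ρ1 σ1)) (Set.mem_Ioo.mpr ⟨hα0, hα1⟩)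
  have t2le : ((((α : ℝ) - 1) / α : ℝ) : EReal) *
      ((((n : ℝ) * r : ℝ) : EReal) - DPetz α ρ2 σ2) ≤ Hoeffding n r ρ2 σ2 :=
    le_biSup (fun α => ((((α : ℝ) - 1) / α : ℝ) : EReal) *
      ((((n : ℝ) * r : ℝ) : EReal) - DPetz α ρ2 σ2)) (Set.mem_Ioo.mpr ⟨hα0, hα1⟩)
  refine le_trans (le_of_eq ?_) (add_le_add t1le t2le)
  unfold DPetz
  rw [if_pos hsT, if_pos hs1, if_pos hs2, hQmul]
  rw [← EReal.coe_sub, ← EReal.coe_mul, ← EReal.coe_sub, ← EReal.coe_mul,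
    ← EReal.coe_sub, ← EReal.coe_mul, ← EReal.coe_add, EReal.coe_eq_coe_iff]
  rw [Real.logb_mul (ne_of_gt hQ1) (ne_of_gt hQ2)]
  push_cast
  ring

end HoeffdingSub

/-- The set-extended quantum Hoeffding divergence is subadditive along
stable sequences of sets of quantum states. -/
theorem hoeffdingSet_subadditive {d : ℕ} {r : ℝ} (hr : 0 < r)
    (A B : ∀ n : ℕ, Set (Mat d n))
    (hAstate : ∀ n, ∀ ρ ∈ A n, IsState ρ) (hBstate : ∀ n, ∀ σ ∈ B n, IsState σ)
    (hAstable : Stable A) (hBstable : Stable B) (m n : ℕ) :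
    HoeffdingSet (m + n) r (A (m + n)) (B (m + n)) ≤
      HoeffdingSet m r (A m) (B m) + HoeffdingSet n r (A n) (B n) := by
  classical
  set a := HoeffdingSet m r (A m) (B m) with ha
  set b := HoeffdingSet n r (A n) (B n) with hb
  -- uniform lower bounds
  have lba : ((-(2 * Real.logb 2 (Fintype.card (TIdx d m)) + m * r) : ℝ) : EReal) ≤ a :=
    le_iInf₂ fun ρ hρ => le_iInf₂ fun σ hσ =>
      HoeffdingSub.hoeffding_lb r (hAstate m ρ hρ) (hBstate m σ hσ)
  have lbb : ((-(2 * Real.logb 2 (Fintype.card (TIdx d n)) + n * r) : ℝ) : EReal) ≤ b :=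
    le_iInf₂ fun ρ hρ => le_iInf₂ fun σ hσ =>
      HoeffdingSub.hoeffding_lb r (hAstate n ρ hρ) (hBstate n σ hσ)
  have hane : a ≠ ⊥ := fun h => by
    rw [h] at lba; exact (EReal.bot_lt_coe _).not_ge lba
  have hbne : b ≠ ⊥ := fun h => by
    rw [h] at lbb; exact (EReal.bot_lt_coe _).not_ge lbb
  have key : ∀ ρ1 ∈ A m, ∀ σ1 ∈ B m, ∀ ρ2 ∈ A n, ∀ σ2 ∈ B n,
      HoeffdingSet (m + n) r (A (m + n)) (B (m + n)) ≤
        Hoeffding m r ρ1 σ1 + Hoeffding n r ρ2 σ2 := by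
    intro ρ1 hρ1 σ1 hσ1 ρ2 hρ2 σ2 hσ2
    have hmemA : tensorProd ρ1 ρ2 ∈ A (m + n) := hAstable m n ρ1 hρ1 ρ2 hρ2
    have hmemB : tensorProd σ1 σ2 ∈ B (m + n) := hBstable m n σ1 hσ1 σ2 hσ2
    calc HoeffdingSet (m + n) r (A (m + n)) (B (m + n))
        ≤ Hoeffding (m + n) r (tensorProd ρ1 ρ2) (tensorProd σ1 σ2) := by
          refine le_trans (iInf₂_le (tensorProd ρ1 ρ2) hmemA) ?_
          exact iInf₂_le (tensorProd σ1 σ2) hmemB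
      _ ≤ Hoeffding m r ρ1 σ1 + Hoeffding n r ρ2 σ2 :=
          HoeffdingSub.hoeffding_tensor_le r (hAstate m ρ1 hρ1) (hBstate m σ1 hσ1)
            (hAstate n ρ2 hρ2) (hBstate n σ2 hσ2)
  by_cases hatop : a = ⊤
  · rw [hatop, EReal.top_add_of_ne_bot hbne]; exact le_top
  by_cases hbtop : b = ⊤
  · rw [hbtop, EReal.add_top_of_ne_bot hane]; exact le_top
  -- both finite
  set x := a.toReal with hx
  set y := b.toReal with hy
  have hax : a = (x : EReal) := (EReal.coe_toReal hatop hane).symm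
  have hby : b = (y : EReal) := (EReal.coe_toReal hbtop hbne).symm
  by_contra hcon
  push_neg at hcon
  obtain ⟨c, hc1, hc2⟩ := EReal.exists_between_coe_real hcon
  rw [hax, hby, ← EReal.coe_add] at hc1
  have hxy : x + y < c := EReal.coe_lt_coe_iff.mp hc1
  set ε : ℝ := (c - (x + y)) / 2 with hε
  have hεpos : 0 < ε := by rw [hε]; linarith
  have hax' : a < ((x + ε : ℝ) : EReal) := by
    rw [hax, EReal.coe_lt_coe_iff]; linarith
  have hby' : b < ((y + ε : ℝ) : EReal) := by
    rw [hby, EReal.coe_lt_coe_iff]; linarith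
  rw [ha] at hax'
  rw [hb] at hby'
  unfold HoeffdingSet at hax' hby'
  rw [iInf_lt_iff] at hax' hby'
  obtain ⟨ρ1, hρ1'⟩ := hax'
  rw [iInf_lt_iff] at hρ1'
  obtain ⟨hρ1, hρ1''⟩ := hρ1'
  rw [iInf_lt_iff] at hρ1''
  obtain ⟨σ1, hσ1'⟩ := hρ1''
  rw [iInf_lt_iff] at hσ1'
  obtain ⟨hσ1, hH1⟩ := hσ1'
  obtain ⟨ρ2, hρ2'⟩ := hby'
  rw [iInf_lt_iff] at hρ2'
  obtain ⟨hρ2, hρ2''⟩ := hρ2'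
  rw [iInf_lt_iff] at hρ2''
  obtain ⟨σ2, hσ2'⟩ := hρ2''
  rw [iInf_lt_iff] at hσ2'
  obtain ⟨hσ2, hH2⟩ := hσ2'
  have hH1ne : Hoeffding m r ρ1 σ1 ≠ ⊥ :=
    HoeffdingSub.hoeffding_ne_bot r (hAstate m ρ1 hρ1) (hBstate m σ1 hσ1)
  have hH2ne : Hoeffding n r ρ2 σ2 ≠ ⊥ :=
    HoeffdingSub.hoeffding_ne_bot r (hAstate n ρ2 hρ2) (hBstate n σ2 hσ2)
  have hH1top : Hoeffding m r ρ1 σ1 ≠ ⊤ := fun h => by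
    rw [h] at hH1; exact (not_top_lt) hH1
  have hH2top : Hoeffding n r ρ2 σ2 ≠ ⊤ := fun h => by
    rw [h] at hH2; exact (not_top_lt) hH2
  set h1 := (Hoeffding m r ρ1 σ1).toReal with hh1
  set h2 := (Hoeffding n r ρ2 σ2).toReal with hh2
  have hH1eq : Hoeffding m r ρ1 σ1 = (h1 : EReal) := (EReal.coe_toReal hH1top hH1ne).symm
  have hH2eq : Hoeffding n r ρ2 σ2 = (h2 : EReal) := (EReal.coe_toReal hH2top hH2ne).symm
  rw [hH1eq] at hH1
  rw [hH2eq] at hH2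
  have hr1 : h1 < x + ε := EReal.coe_lt_coe_iff.mp hH1
  have hr2 : h2 < y + ε := EReal.coe_lt_coe_iff.mp hH2
  have hkey := key ρ1 hρ1 σ1 hσ1 ρ2 hρ2 σ2 hσ2
  rw [hH1eq, hH2eq, ← EReal.coe_add] at hkey
  have hlt : ((h1 + h2 : ℝ) : EReal) < (c : EReal) := by
    rw [EReal.coe_lt_coe_iff]
    rw [hε] at hr1 hr2
    linarith
  exact absurd (lt_trans (hkey.trans_lt hlt) hc2) (lt_irrefl _)

end
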